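/- For every real q with -1 < q < 0, the set of negative real zeros of θ(q,·) is infinite and the set of positive real zeros of θ(q,·) is infinite. -/

import Mathlib

open Filter Topology Set

private def ptT (j : ℕ) : ℕ := j * (j + 1) / 2
private def ptE (m : ℕ) : ℕ := m * (m - 1) / 2

private lemma ptT_succ (j : ℕ) : ptT (j + 1) = ptT j + (j + 1) := by
  unfold ptT
  have h : (j + 1) * (j + 1 + 1) = j * (j + 1) + (j + 1) * 2 := by ring
  rw [h, Nat.add_mul_div_right _ _ (by norm_num : 0 < 2)]

private lemma ptE_succ (m : ℕ) : ptE (m + 1) = ptE m + m := by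
  cases m with
  | zero => rfl
  | succ k =>
    unfold ptE
    simp only [Nat.add_sub_cancel]
    have h : (k + 1 + 1) * (k + 1) = (k + 1) * k + (k + 1) * 2 := by ring
    rw [h, Nat.add_mul_div_right _ _ (by norm_num : 0 < 2)]

private lemma ptE_succ_eq_ptT (m : ℕ) : ptE (m + 1) = ptT m := by
  unfold ptE ptT
  simp only [Nat.add_sub_cancel]
  rw [Nat.mul_comm]

private lemma ptE_add_odd (m : ℕ) : Odd (ptE m + ptE (m + 2)) := by
  refine ⟨ptE m + m, ?_⟩
  have h1 : ptE (m + 2) = ptE (m + 1) + (m + 1) := ptE_succ (m + 1)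
  have h2 := ptE_succ m
  omega

private lemma pt_summable_aux {r R : ℝ} (hr0 : 0 ≤ r) (hr1 : r < 1) (hR : 0 ≤ R) :
    Summable fun j : ℕ => r ^ ptT j * R ^ j := by
  apply summable_of_ratio_norm_eventually_le (r := 1 / 2) (by norm_num)
  have h : Tendsto (fun j : ℕ => r ^ (j + 1) * R) atTop (𝓝 (0 * R)) :=
    (((tendsto_pow_atTop_nhds_zero_of_lt_one hr0 hr1).comp (tendsto_add_atTop_nat 1))).mul_const R
  rw [zero_mul] at h
  filter_upwards [h.eventually (eventually_le_nhds (by norm_num : (0:ℝ) < 1/2))] with j hj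
  have he : r ^ ptT (j + 1) * R ^ (j + 1) = (r ^ (j + 1) * R) * (r ^ ptT j * R ^ j) := by
    rw [ptT_succ, pow_add, pow_succ]; ring
  rw [Real.norm_eq_abs, Real.norm_eq_abs, he,
    abs_of_nonneg (by positivity), abs_of_nonneg (by positivity)]
  have h2 : (0:ℝ) ≤ r ^ ptT j * R ^ j := by positivity
  nlinarith [mul_nonneg (mul_nonneg (pow_nonneg hr0 (j+1)) hR) h2]

/-- The partial theta function `θ(q,x) = ∑_{j=0}^∞ q^(j(j+1)/2) x^j`. -/
noncomputable def theta (q x : ℝ) : ℝ := ∑' j : ℕ, q ^ (j * (j + 1) / 2) * x ^ j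

private lemma theta_eq (q x : ℝ) : theta q x = ∑' j : ℕ, q ^ ptT j * x ^ j := rfl

private lemma theta_summable {q : ℝ} (hq : |q| < 1) (x : ℝ) :
    Summable fun j : ℕ => q ^ ptT j * x ^ j := by
  apply Summable.of_norm_bounded (pt_summable_aux (abs_nonneg q) hq (abs_nonneg x))
  intro j
  rw [norm_mul, norm_pow, norm_pow, Real.norm_eq_abs, Real.norm_eq_abs]

private noncomputable def ptC (q : ℝ) (z : ℂ) : ℂ := ∑' j : ℕ, (q : ℂ) ^ ptT j * z ^ j

private lemma ptC_norm_term (q : ℝ) (z : ℂ) (j : ℕ) :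
    ‖(q : ℂ) ^ ptT j * z ^ j‖ = |q| ^ ptT j * ‖z‖ ^ j := by
  rw [norm_mul, norm_pow, norm_pow, Complex.norm_real, Real.norm_eq_abs]

private lemma ptC_summable {q : ℝ} (hq : |q| < 1) (z : ℂ) :
    Summable fun j : ℕ => (q : ℂ) ^ ptT j * z ^ j := by
  apply Summable.of_norm_bounded (pt_summable_aux (abs_nonneg q) hq (norm_nonneg z))
  intro j
  rw [ptC_norm_term]

private lemma ptC_ofReal (q x : ℝ) : ptC q (x : ℂ) = ((theta q x : ℝ) : ℂ) := by
  rw [theta_eq, Complex.ofReal_tsum, ptC]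
  exact tsum_congr fun j => by push_cast; ring

private lemma ptC_differentiable {q : ℝ} (hq : |q| < 1) : Differentiable ℂ (ptC q) := by
  intro z₀
  have hU : DifferentiableOn ℂ (ptC q) (Metric.ball 0 (‖z₀‖ + 1)) := by
    apply Complex.differentiableOn_tsum_of_summable_norm
      (u := fun j => |q| ^ ptT j * (‖z₀‖ + 1) ^ j)
      (pt_summable_aux (abs_nonneg q) hq (by positivity))
      (fun i => ((differentiable_pow i).const_mul _).differentiableOn)
      Metric.isOpen_ball
    intro i w hw
    rw [ptC_norm_term]
    have hw' : ‖w‖ ≤ ‖z₀‖ + 1 := le_of_lt (by simpa [Metric.mem_ball] using hw)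
    exact mul_le_mul_of_nonneg_left (pow_le_pow_left₀ (norm_nonneg w) hw' i) (by positivity)
  exact hU.differentiableAt (Metric.isOpen_ball.mem_nhds
    (mem_ball_zero_iff.mpr (lt_add_one _)))

private lemma ptC_zero (q : ℝ) : ptC q 0 = 1 := by
  rw [ptC, tsum_eq_single 0 (fun j hj => by simp [zero_pow hj])]
  simp [ptT]

private lemma ptC_bound {q : ℝ} (hq : |q| < 1) {z : ℂ} (hz : ‖z‖ ≤ 1) :
    ‖ptC q z‖ ≤ ∑' j : ℕ, |q| ^ ptT j := by
  have hs : Summable fun j : ℕ => ‖(q : ℂ) ^ ptT j * z ^ j‖ := by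
    simp only [ptC_norm_term]
    exact pt_summable_aux (abs_nonneg q) hq (norm_nonneg z)
  refine (norm_tsum_le_tsum_norm hs).trans (Summable.tsum_le_tsum (fun j => ?_) hs ?_)
  · rw [ptC_norm_term]
    calc |q| ^ ptT j * ‖z‖ ^ j ≤ |q| ^ ptT j * 1 ^ j := by
          exact mul_le_mul_of_nonneg_left (pow_le_pow_left₀ (norm_nonneg z) hz j) (by positivity)
      _ = |q| ^ ptT j := by simp
  · exact (pt_summable_aux (abs_nonneg q) hq zero_le_one).congr (fun j => by simp)

private lemma theta_FE {q : ℝ} (hq : |q| < 1) (x : ℝ) :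
    theta q x = 1 + q * x * theta q (q * x) := by
  have hs := theta_summable hq x
  rw [theta_eq, Summable.tsum_eq_zero_add hs]
  have h0 : q ^ ptT 0 * x ^ 0 = 1 := by simp [ptT]
  have h1 : ∀ j : ℕ, q ^ ptT (j + 1) * x ^ (j + 1) = q * x * (q ^ ptT j * (q * x) ^ j) := by
    intro j
    rw [ptT_succ, pow_add, mul_pow, pow_succ]
    ring
  rw [h0]
  congr 1
  rw [tsum_congr h1, tsum_mul_left, theta_eq]

private lemma theta_continuous {q : ℝ} (hq : |q| < 1) : Continuous (theta q) := by
  have h : theta q = fun x : ℝ => (ptC q (x : ℂ)).re := by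
    funext x
    rw [ptC_ofReal, Complex.ofReal_re]
  rw [h]
  exact Complex.continuous_re.comp (((ptC_differentiable hq).continuous).comp
    Complex.continuous_ofReal)

private lemma theta_shift {q x₀ : ℝ} (hq : |q| < 1) (hq0 : q ≠ 0) (hx0 : x₀ ≠ 0) (m : ℕ) :
    theta q (x₀ / q ^ m) * q ^ ptE m =
      x₀ ^ m * (theta q x₀ + ∑ i ∈ Finset.range m, q ^ ptT i / x₀ ^ (i + 1)) := by
  induction m with
  | zero => simp [ptE]
  | succ m ih =>
    have hqm : q ^ m ≠ 0 := pow_ne_zero _ hq0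
    have hqE : q ^ ptE m ≠ 0 := pow_ne_zero _ hq0
    have hfe := theta_FE hq (x₀ / q ^ (m + 1))
    have harg : q * (x₀ / q ^ (m + 1)) = x₀ / q ^ m := by
      rw [pow_succ]
      field_simp
    rw [harg] at hfe
    have hth : theta q (x₀ / q ^ m) =
        x₀ ^ m * (theta q x₀ + ∑ i ∈ Finset.range m, q ^ ptT i / x₀ ^ (i + 1)) / q ^ ptE m := by
      rw [eq_div_iff hqE]; exact ih
    rw [hfe, hth, ptE_succ, Finset.sum_range_succ, ← ptE_succ_eq_ptT m, ptE_succ]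
    field_simp
    ring

private lemma key {q : ℝ} (hq₁ : -1 < q) (hq₂ : q < 0) {x₀ : ℝ} (hx₀ : 0 < x₀)
    (hc : theta q x₀ + x₀⁻¹ * theta q x₀⁻¹ ≠ 0) :
    (∀ B : ℝ, ∃ z, B < z ∧ 0 < z ∧ theta q z = 0) ∧
    (∀ B : ℝ, ∃ z, z < B ∧ z < 0 ∧ theta q z = 0) := by
  have hq : |q| < 1 := abs_lt.mpr ⟨hq₁, hq₂.trans one_pos⟩
  have hq0 : q ≠ 0 := ne_of_lt hq₂
  set c := theta q x₀ + x₀⁻¹ * theta q x₀⁻¹ with hcdef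
  set W : ℕ → ℝ := fun m => theta q x₀ + ∑ i ∈ Finset.range m, q ^ ptT i / x₀ ^ (i + 1)
    with hWdef
  have hWt : Tendsto W atTop (𝓝 c) := by
    have hs := theta_summable hq x₀⁻¹
    have h1 := hs.hasSum.tendsto_sum_nat
    have h2 : Tendsto (fun m => x₀⁻¹ * ∑ i ∈ Finset.range m, q ^ ptT i * (x₀⁻¹) ^ i)
        atTop (𝓝 (x₀⁻¹ * theta q x₀⁻¹)) := by
      rw [theta_eq]; exact h1.const_mul _
    have h3 : (fun m => x₀⁻¹ * ∑ i ∈ Finset.range m, q ^ ptT i * (x₀⁻¹) ^ i)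
        = fun m => ∑ i ∈ Finset.range m, q ^ ptT i / x₀ ^ (i + 1) := by
      funext m
      rw [Finset.mul_sum]
      refine Finset.sum_congr rfl fun i _ => ?_
      rw [div_eq_mul_inv, ← inv_pow, pow_succ']
      ring
    rw [h3] at h2
    simpa [hWdef, hcdef] using tendsto_const_nhds.add h2
  obtain ⟨K, hK⟩ := Metric.tendsto_atTop.mp hWt |c| (abs_pos.mpr hc)
  have hsame : ∀ m, K ≤ m → 0 < W m * W (m + 2) := by
    intro m hm
    have h1 := hK m hm
    have h2 := hK (m + 2) (hm.trans (by omega))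
    rw [Real.dist_eq] at h1 h2
    rcases lt_or_gt_of_ne hc with hneg | hpos
    · rw [abs_of_neg hneg] at h1 h2
      have h1' := abs_lt.mp h1
      have h2' := abs_lt.mp h2
      exact mul_pos_of_neg_of_neg (by linarith [h1'.2]) (by linarith [h2'.2])
    · rw [abs_of_pos hpos] at h1 h2
      have h1' := abs_lt.mp h1
      have h2' := abs_lt.mp h2
      exact mul_pos (by linarith [h1'.1]) (by linarith [h2'.1])
  have hval : ∀ m, theta q (x₀ / q ^ m) * q ^ ptE m = x₀ ^ m * W m :=
    fun m => theta_shift hq hq0 (ne_of_gt hx₀) m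
  have hprod : ∀ m, K ≤ m → theta q (x₀ / q ^ m) * theta q (x₀ / q ^ (m + 2)) < 0 := by
    intro m hm
    have hdenneg : q ^ (ptE m + ptE (m + 2)) < 0 := (ptE_add_odd m).pow_neg hq₂
    have h1 := hval m
    have h2 := hval (m + 2)
    have hp1 : (0:ℝ) < x₀ ^ m := pow_pos hx₀ m
    have hp2 : (0:ℝ) < x₀ ^ (m + 2) := pow_pos hx₀ _
    have hW := hsame m hm
    have hnum : 0 < x₀ ^ m * W m * (x₀ ^ (m + 2) * W (m + 2)) := by
      nlinarith [mul_pos (mul_pos hp1 hp2) hW]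
    have heq : theta q (x₀ / q ^ m) * theta q (x₀ / q ^ (m + 2)) * q ^ (ptE m + ptE (m + 2))
        = x₀ ^ m * W m * (x₀ ^ (m + 2) * W (m + 2)) := by
      rw [pow_add, ← h1, ← h2]; ring
    by_contra hcon
    push_neg at hcon
    have hle : theta q (x₀ / q ^ m) * theta q (x₀ / q ^ (m + 2)) * q ^ (ptE m + ptE (m + 2)) ≤ 0 :=
      mul_nonpos_iff.mpr (Or.inl ⟨hcon, hdenneg.le⟩)
    linarith [heq ▸ hle, hnum]
  have hcont := theta_continuous hq
  have hq2pos : (0:ℝ) < q ^ 2 := by nlinarith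
  have hq2lt1 : q ^ 2 < 1 := by nlinarith
  have hinv1 : 1 < (q ^ 2)⁻¹ := (one_lt_inv₀ hq2pos).mpr hq2lt1
  have hpowt : Tendsto (fun k : ℕ => ((q ^ 2)⁻¹) ^ k) atTop atTop :=
    tendsto_pow_atTop_atTop_of_one_lt hinv1
  constructor
  · intro B
    have hqk : ∀ j : ℕ, 0 < q ^ (2 * j) := fun j => by rw [pow_mul]; exact pow_pos hq2pos j
    have htend : Tendsto (fun k : ℕ => x₀ / q ^ (2 * k)) atTop atTop := by
      refine (hpowt.const_mul_atTop hx₀).congr fun k => ?_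
      rw [pow_mul, div_eq_mul_inv, inv_pow]
    obtain ⟨k, hk1, hk2⟩ : ∃ k : ℕ, K ≤ 2 * k ∧ B < x₀ / q ^ (2 * k) :=
      ((Filter.eventually_atTop.mpr ⟨K, fun k hk => by omega⟩).and
        (htend.eventually_gt_atTop B)).exists
    have hlt : q ^ (2 * k + 2) < q ^ (2 * k) := by
      rw [pow_add]
      nlinarith [hqk k]
    have hpos2 : (0:ℝ) < q ^ (2 * k + 2) := by
      have : q ^ (2 * k + 2) = q ^ (2 * k) * q ^ 2 := by rw [pow_add]
      rw [this]; exact mul_pos (hqk k) hq2pos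
    have hpp' : x₀ / q ^ (2 * k) < x₀ / q ^ (2 * k + 2) :=
      div_lt_div_of_pos_left hx₀ hpos2 hlt
    have hprodk := hprod (2 * k) hk1
    rcases mul_neg_iff.mp hprodk with ⟨hp1, hp2⟩ | ⟨hp1, hp2⟩
    · obtain ⟨z, hz, hz0⟩ := intermediate_value_Icc' (le_of_lt hpp') hcont.continuousOn
        ⟨le_of_lt hp2, le_of_lt hp1⟩
      exact ⟨z, lt_of_lt_of_le hk2 hz.1,
        lt_of_lt_of_le (div_pos hx₀ (hqk k)) hz.1, hz0⟩
    · obtain ⟨z, hz, hz0⟩ := intermediate_value_Icc (le_of_lt hpp') hcont.continuousOn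
        ⟨le_of_lt hp1, le_of_lt hp2⟩
      exact ⟨z, lt_of_lt_of_le hk2 hz.1,
        lt_of_lt_of_le (div_pos hx₀ (hqk k)) hz.1, hz0⟩
  · intro B
    have hqodd : ∀ j : ℕ, q ^ (2 * j + 1) < 0 := fun j => Odd.pow_neg ⟨j, by omega⟩ hq₂
    have htendb : Tendsto (fun k : ℕ => x₀ / q ^ (2 * k + 1)) atTop atBot := by
      refine (hpowt.const_mul_atTop_of_neg (div_neg_of_pos_of_neg hx₀ hq₂)).congr fun k => ?_
      have hqp : q ^ (2 * k + 1) = (q ^ 2) ^ k * q := by rw [pow_succ, pow_mul]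
      rw [hqp, inv_pow, ← div_eq_mul_inv, div_div, mul_comm q ((q ^ 2) ^ k)]
    obtain ⟨k, hk1, hk2⟩ : ∃ k : ℕ, K ≤ 2 * k + 1 ∧ x₀ / q ^ (2 * k + 1) < B :=
      ((Filter.eventually_atTop.mpr ⟨K, fun k hk => by omega⟩).and
        (htendb.eventually_lt_atBot B)).exists
    have ha : q ^ (2 * k + 1) < 0 := hqodd k
    have ha' : q ^ (2 * k + 1 + 2) < 0 := by
      have : q ^ (2 * k + 1 + 2) = q ^ (2 * k + 1) * q ^ 2 := by rw [pow_add]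
      rw [this]; exact mul_neg_of_neg_of_pos ha hq2pos
    have haa' : q ^ (2 * k + 1) < q ^ (2 * k + 1 + 2) := by
      have : q ^ (2 * k + 1 + 2) = q ^ (2 * k + 1) * q ^ 2 := by rw [pow_add]
      rw [this]; nlinarith
    have hnn' : x₀ / q ^ (2 * k + 1 + 2) < x₀ / q ^ (2 * k + 1) := by
      have h1 : x₀ / -q ^ (2 * k + 1) < x₀ / -q ^ (2 * k + 1 + 2) :=
        div_lt_div_of_pos_left hx₀ (by linarith) (by linarith)
      rw [div_neg, div_neg] at h1
      linarith
    have hprodk := hprod (2 * k + 1) hk1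
    have hn0 : x₀ / q ^ (2 * k + 1) < 0 := div_neg_of_pos_of_neg hx₀ ha
    rcases mul_neg_iff.mp hprodk with ⟨hp1, hp2⟩ | ⟨hp1, hp2⟩
    · obtain ⟨z, hz, hz0⟩ := intermediate_value_Icc (le_of_lt hnn') hcont.continuousOn
        ⟨le_of_lt hp2, le_of_lt hp1⟩
      exact ⟨z, lt_of_le_of_lt hz.2 hk2, lt_of_le_of_lt hz.2 hn0, hz0⟩
    · obtain ⟨z, hz, hz0⟩ := intermediate_value_Icc' (le_of_lt hnn') hcont.continuousOn
        ⟨le_of_lt hp1, le_of_lt hp2⟩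
      exact ⟨z, lt_of_le_of_lt hz.2 hk2, lt_of_le_of_lt hz.2 hn0, hz0⟩

private lemma exists_good_point {q : ℝ} (hq₁ : -1 < q) (hq₂ : q < 0) :
    ∃ x₀ : ℝ, 0 < x₀ ∧ theta q x₀ + x₀⁻¹ * theta q x₀⁻¹ ≠ 0 := by
  have hq : |q| < 1 := abs_lt.mpr ⟨hq₁, hq₂.trans one_pos⟩
  by_contra hcon
  push_neg at hcon
  -- hcon : ∀ x₀, 0 < x₀ → theta q x₀ + x₀⁻¹ * theta q x₀⁻¹ = 0
  set f : ℂ → ℂ := ptC q with hfdef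
  set g : ℂ → ℂ := fun z => -(z⁻¹ * ptC q z⁻¹) with hgdef
  have hfd : Differentiable ℂ f := ptC_differentiable hq
  have hU : IsOpen ({(0 : ℂ)}ᶜ : Set ℂ) := isOpen_compl_singleton
  have hfa : AnalyticOnNhd ℂ f {(0 : ℂ)}ᶜ := hfd.differentiableOn.analyticOnNhd hU
  have hgd : DifferentiableOn ℂ g {(0 : ℂ)}ᶜ := by
    apply DifferentiableOn.neg
    apply DifferentiableOn.mul
    · exact fun z hz => (differentiableAt_inv (by simpa using hz)).differentiableWithinAt
    · exact hfd.comp_differentiableOn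
        (fun z hz => (differentiableAt_inv (by simpa using hz)).differentiableWithinAt)
  have hga : AnalyticOnNhd ℂ g {(0 : ℂ)}ᶜ := hgd.analyticOnNhd hU
  have hconn : IsPreconnected ({(0 : ℂ)}ᶜ : Set ℂ) :=
    (isConnected_compl_singleton_of_one_lt_rank
      (by rw [Complex.rank_real_complex]; norm_num) (0 : ℂ)).isPreconnected
  have hreal : ∀ x : ℝ, 0 < x → f (x : ℂ) = g (x : ℂ) := by
    intro x hx
    have hx0 : (x : ℂ) ≠ 0 := by exact_mod_cast ne_of_gt hx
    have h1 : ((x : ℂ))⁻¹ = ((x⁻¹ : ℝ) : ℂ) := by push_cast; ring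
    rw [hfdef, hgdef]
    simp only [h1]
    rw [ptC_ofReal, ptC_ofReal]
    have := hcon x hx
    have hth : theta q x = -(x⁻¹ * theta q x⁻¹) := by linarith
    rw [hth]
    push_cast
    ring
  have hfreq : ∃ᶠ z in 𝓝[≠] (1 : ℂ), f z = g z := by
    have hseq : Tendsto (fun n : ℕ => ((1 + ((n : ℝ) + 1)⁻¹ : ℝ) : ℂ)) atTop (𝓝[≠] 1) := by
      apply tendsto_nhdsWithin_of_tendsto_nhds_of_eventually_within
      · have : Tendsto (fun n : ℕ => (1 + ((n : ℝ) + 1)⁻¹ : ℝ)) atTop (𝓝 1) := by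
          have h0 : Tendsto (fun n : ℕ => ((n : ℝ) + 1)⁻¹) atTop (𝓝 0) :=
            tendsto_one_div_add_atTop_nhds_zero_nat.congr fun n => by rw [one_div]
          simpa using tendsto_const_nhds.add h0
        have h2 := Complex.continuous_ofReal.continuousAt.tendsto.comp this
        simpa [Function.comp_def] using h2
      · apply Filter.Eventually.of_forall
        intro n
        simp only [Set.mem_compl_iff, Set.mem_singleton_iff]
        intro h
        have : (1 + ((n : ℝ) + 1)⁻¹ : ℝ) = 1 := by exact_mod_cast h
        have hpos : (0:ℝ) < ((n : ℝ) + 1)⁻¹ := by positivity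
        linarith
    apply hseq.frequently
    apply Filter.Eventually.frequently
    apply Filter.Eventually.of_forall
    intro n
    exact hreal _ (by positivity)
  have heqon : Set.EqOn f g {(0 : ℂ)}ᶜ :=
    hfa.eqOn_of_preconnected_of_frequently_eq hga hconn
      (by simp : (1 : ℂ) ∈ ({(0 : ℂ)}ᶜ : Set ℂ)) hfreq
  set C : ℝ := ∑' j : ℕ, |q| ^ ptT j with hCdef
  have hCsum : Summable fun j : ℕ => |q| ^ ptT j :=
    (pt_summable_aux (abs_nonneg q) hq zero_le_one).congr (fun j => by simp)
  have hC1 : (1 : ℝ) ≤ C := by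
    have := Summable.le_tsum hCsum 0 (fun j _ => by positivity)
    simpa [ptT, hCdef] using this
  have hbound : ∀ z : ℂ, ‖f z‖ ≤ C := by
    intro z
    rcases le_or_gt ‖z‖ 1 with h | h
    · exact ptC_bound hq h
    · have hz0 : z ≠ 0 := by
        intro h0; rw [h0] at h; simp at h; linarith
      rw [heqon hz0]
      have hzinv : ‖z⁻¹‖ ≤ 1 := by
        rw [norm_inv]
        exact inv_le_one_of_one_le₀ h.le
      calc ‖g z‖ = ‖z⁻¹‖ * ‖ptC q z⁻¹‖ := by rw [hgdef]; simp [norm_mul]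
        _ ≤ 1 * C := mul_le_mul hzinv (ptC_bound hq hzinv) (norm_nonneg _) zero_le_one
        _ = C := one_mul C
  have hconst : f ((2 * C : ℝ) : ℂ) = f 0 :=
    hfd.apply_eq_apply_of_bounded
      (isBounded_iff_forall_norm_le.mpr ⟨C, by
        rintro y ⟨z, rfl⟩; exact hbound z⟩) _ _
  have hf0 : f 0 = 1 := ptC_zero q
  have hznorm : ‖((2 * C : ℝ) : ℂ)‖ = 2 * C := by
    rw [Complex.norm_real, Real.norm_eq_abs, abs_of_pos (by linarith)]
  have hz0 : ((2 * C : ℝ) : ℂ) ≠ 0 := by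
    intro h
    rw [h, norm_zero] at hznorm
    linarith
  have hzinv : ‖(((2 * C : ℝ) : ℂ))⁻¹‖ = (2 * C)⁻¹ := by
    rw [norm_inv, hznorm]
  have hnorm : ‖f ((2 * C : ℝ) : ℂ)‖ ≤ (2 * C)⁻¹ * C := by
    rw [heqon hz0, hgdef]
    simp only [norm_neg, norm_mul]
    have hzinv1 : ‖(((2 * C : ℝ) : ℂ))⁻¹‖ ≤ 1 := by
      rw [hzinv]
      rw [inv_le_one_iff₀]
      right; linarith
    exact mul_le_mul (le_of_eq hzinv) (ptC_bound hq hzinv1) (norm_nonneg _)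
      (by positivity)
  rw [hconst, hf0, norm_one] at hnorm
  have hCne : (2 * C) ≠ 0 := by linarith
  have : (2 * C)⁻¹ * C = 1 / 2 := by field_simp
  rw [this] at hnorm
  linarith

theorem stmt_2 (q : ℝ) (hq₁ : -1 < q) (hq₂ : q < 0) :
    {x : ℝ | x < 0 ∧ theta q x = 0}.Infinite ∧ {x : ℝ | 0 < x ∧ theta q x = 0}.Infinite := by
  obtain ⟨x₀, hx₀, hc⟩ := exists_good_point hq₁ hq₂
  obtain ⟨hpos, hneg⟩ := key hq₁ hq₂ hx₀ hc
  constructor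
  · by_contra hfin
    rw [Set.not_infinite] at hfin
    obtain ⟨B, hB⟩ := hfin.bddBelow
    obtain ⟨z, hz1, hz2, hz3⟩ := hneg B
    exact absurd (hB (Set.mem_setOf.mpr ⟨hz2, hz3⟩)) (not_le.mpr hz1)
  · by_contra hfin
    rw [Set.not_infinite] at hfin
    obtain ⟨B, hB⟩ := hfin.bddAbove
    obtain ⟨z, hz1, hz2, hz3⟩ := hpos B
    exact absurd (hB (Set.mem_setOf.mpr ⟨hz2, hz3⟩)) (not_le.mpr hz1)
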